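/- Work in ℝ² with the Euclidean norm, coordinatewise order, and the norm topology, and let I_s = {A ⊆ ℕ : Σ_{a∈A} 1/a < ∞} be the summability ideal. Define t_n = √n for all n ≥ 1 and x_n = (2 + 1/n, 1 + 3/n) if n is not a perfect square, x_n = (5, −5) if n is a perfect square. Then: (i) for every neighborhood V of zero in ℝ² and every μ > 0, the point (2,1) belongs to the rough weighted I_τ-limit set of x with degree of roughness μ·V (so this limit set is nonempty); but (ii) the sequence x is not weighted I_τ-bounded, i.e., there exists a neighborhood U of zero such that for every λ > 0 the set {n ∈ ℕ : λ t_n x_n ∉ U} does not belong to I_s. -/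

import Mathlib

open Topology Filter Set Pointwise

/-- The summability ideal `{A ⊆ ℕ : Σ_{a ∈ A} 1/a < ∞}`. -/
def summabilityIdeal : Set (Set ℕ) :=
  {A | Summable fun a : A => (1 : ℝ) / (a : ℝ)}

/-- The sequence of Example 6: `x n = (5, -5)` if `n` is a perfect square and
`x n = (2 + 1/n, 1 + 3/n)` otherwise. -/
noncomputable def xSeq16 : ℕ → ℝ × ℝ := fun n =>
  if IsSquare n then (5, -5) else (2 + 1 / (n : ℝ), 1 + 3 / (n : ℝ))

lemma mem_summabilityIdeal_iff {A : Set ℕ} :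
    A ∈ summabilityIdeal ↔ Summable (A.indicator fun n : ℕ => (1 : ℝ) / n) :=
  summable_subtype_iff_indicator (f := fun n : ℕ => (1 : ℝ) / n) (s := A)

lemma summabilityIdeal_subset {A B : Set ℕ} (h : B ⊆ A) (hA : A ∈ summabilityIdeal) :
    B ∈ summabilityIdeal := by
  rw [mem_summabilityIdeal_iff] at hA ⊢
  refine Summable.of_nonneg_of_le (fun n => Set.indicator_nonneg (fun m _ => by positivity) n)
    (fun n => Set.indicator_le_indicator_of_subset h (fun m => by positivity) n) hA

lemma summabilityIdeal_union {A B : Set ℕ} (hA : A ∈ summabilityIdeal)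
    (hB : B ∈ summabilityIdeal) : A ∪ B ∈ summabilityIdeal := by
  rw [mem_summabilityIdeal_iff] at hA hB ⊢
  refine Summable.of_nonneg_of_le (fun n => Set.indicator_nonneg (fun m _ => by positivity) n)
    (fun n => ?_) (hA.add hB)
  have h1 : (0:ℝ) ≤ A.indicator (fun n : ℕ => (1:ℝ)/n) n :=
    Set.indicator_nonneg (fun m _ => by positivity) n
  have h2 : (0:ℝ) ≤ B.indicator (fun n : ℕ => (1:ℝ)/n) n :=
    Set.indicator_nonneg (fun m _ => by positivity) n
  by_cases hn : n ∈ A ∪ B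
  · rw [Set.indicator_of_mem hn]
    rcases hn with hn | hn
    · rw [Set.indicator_of_mem hn]; linarith
    · rw [Set.indicator_of_mem (s := B) hn]; linarith
  · rw [Set.indicator_of_notMem hn]; positivity

lemma summabilityIdeal_finite {A : Set ℕ} (h : A.Finite) : A ∈ summabilityIdeal := by
  rw [mem_summabilityIdeal_iff]
  refine summable_of_ne_finset_zero (s := h.toFinset) fun n hn => ?_
  rw [Set.Finite.mem_toFinset] at hn
  exact Set.indicator_of_notMem hn _

lemma summabilityIdeal_squares : {n : ℕ | IsSquare n} ∈ summabilityIdeal := by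
  rw [mem_summabilityIdeal_iff]
  have hinj : Function.Injective (fun k : ℕ => k * k) := fun a b h => by
    exact Nat.mul_self_inj.mp h
  rw [← Function.Injective.summable_iff hinj ?_]
  · refine (Real.summable_one_div_nat_pow.mpr one_lt_two).congr fun k => ?_
    simp only [Function.comp_apply]
    rw [Set.indicator_of_mem (by exact ⟨k, rfl⟩)]
    push_cast
    ring
  · intro x hx
    refine Set.indicator_of_notMem (fun hsq => hx ?_) _
    obtain ⟨r, hr⟩ := hsq
    exact ⟨r, hr.symm⟩

lemma summabilityIdeal_tail (N : ℕ) : {n : ℕ | N ≤ n} ∉ summabilityIdeal := by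
  rw [mem_summabilityIdeal_iff]
  intro h
  have h2 : Summable (fun n : ℕ => if n < N then (1:ℝ)/n else 0) := by
    refine summable_of_ne_finset_zero (s := Finset.range N) fun n hn => ?_
    rw [Finset.mem_range] at hn
    simp [hn]
  apply Real.not_summable_one_div_natCast
  refine (h.add h2).congr fun n => ?_
  by_cases hn : N ≤ n
  · rw [Set.indicator_of_mem (show n ∈ {m | N ≤ m} from hn), if_neg (not_lt.mpr hn), add_zero]
  · rw [Set.indicator_of_notMem (show n ∉ {m | N ≤ m} from hn), if_pos (not_le.mp hn),
      zero_add]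

/-- In ℝ² with the summability ideal and weights `t n = √n`:
(i) for every neighborhood `V` of zero and every `μ > 0`, the point `(2, 1)` is a rough
weighted `I`-τ-limit point of the sequence with degree of roughness `μ • V` (so the rough
weighted limit set is nonempty); but (ii) the sequence is not weighted `I`-τ-bounded. -/
theorem wLimSet_nonempty_but_not_bounded_example6 :
    (∀ V ∈ 𝓝 (0 : ℝ × ℝ), ∀ μ : ℝ, 0 < μ →
      ∀ U ∈ 𝓝 (0 : ℝ × ℝ),
        {n : ℕ | Real.sqrt n • (xSeq16 n - ((2 : ℝ), (1 : ℝ))) ∉ μ • V + U}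
          ∈ summabilityIdeal) ∧
    (∃ U ∈ 𝓝 (0 : ℝ × ℝ), ∀ lam : ℝ, 0 < lam →
        {n : ℕ | (lam * Real.sqrt n) • xSeq16 n ∉ U} ∉ summabilityIdeal) := by
  constructor
  · intro V hV μ hμ U hU
    have hUsub : U ⊆ μ • V + U := by
      intro u hu
      have h0 : (0 : ℝ × ℝ) ∈ μ • V := by
        have := Set.smul_mem_smul_set (a := μ) (mem_of_mem_nhds hV)
        simpa using this
      simpa using Set.add_mem_add h0 hu
    obtain ⟨ε, hε, hball⟩ := Metric.mem_nhds_iff.mp hU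
    set N : ℕ := ⌈(3 / ε) ^ 2⌉₊ + 1 with hN
    refine summabilityIdeal_subset ?_
      (summabilityIdeal_union summabilityIdeal_squares
        (summabilityIdeal_finite (Set.finite_Iio N)))
    intro n hn
    by_contra hcon
    rw [Set.mem_union] at hcon
    push_neg at hcon
    obtain ⟨hnsq, hnN⟩ := hcon
    rw [Set.mem_Iio, not_lt] at hnN
    have hn1 : 1 ≤ n := by
      rcases Nat.eq_zero_or_pos n with h0 | h; · exact absurd (h0 ▸ ⟨0, rfl⟩) hnsq
      exact h
    have hnpos : (0 : ℝ) < n := by exact_mod_cast hn1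
    have hspos : (0 : ℝ) < Real.sqrt n := Real.sqrt_pos.mpr hnpos
    have hms : Real.sqrt n * Real.sqrt n = n := Real.mul_self_sqrt hnpos.le
    have heq : Real.sqrt n • (xSeq16 n - ((2 : ℝ), (1 : ℝ)))
        = ((Real.sqrt n)⁻¹ • ((1 : ℝ), (3 : ℝ)) : ℝ × ℝ) := by
      rw [show xSeq16 n = (2 + 1 / (n : ℝ), 1 + 3 / (n : ℝ)) from if_neg hnsq]
      rw [Prod.mk_sub_mk, Prod.smul_mk, Prod.smul_mk]
      simp only [smul_eq_mul]
      have e1 : Real.sqrt n * (2 + 1 / (n : ℝ) - 2) = (Real.sqrt n)⁻¹ * 1 := by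
        field_simp
        linarith [hms]
      have e2 : Real.sqrt n * (1 + 3 / (n : ℝ) - 1) = (Real.sqrt n)⁻¹ * 3 := by
        field_simp
        linarith [hms]
      rw [Prod.mk.injEq]
      exact ⟨e1, e2⟩
    apply hn
    apply hUsub
    apply hball
    rw [heq, Metric.mem_ball, dist_zero_right, norm_smul]
    have hnorm13 : ‖((1 : ℝ), (3 : ℝ))‖ = 3 := by
      rw [Prod.norm_def]
      simp [abs_of_nonneg]
    rw [hnorm13, Real.norm_eq_abs, abs_of_pos (inv_pos.mpr hspos)]
    have hlt : 3 / ε < Real.sqrt n := by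
      rw [Real.lt_sqrt (by positivity)]
      have : ((3 / ε) ^ 2 : ℝ) ≤ ⌈(3 / ε) ^ 2⌉₊ := Nat.le_ceil _
      have hNn : (N : ℝ) ≤ n := by exact_mod_cast hnN
      have : ((3 / ε) ^ 2 : ℝ) < N := by
        rw [hN]
        push_cast
        linarith
      linarith
    rw [inv_mul_lt_iff₀ hspos]
    calc 3 = (3 / ε) * ε := by field_simp
    _ < Real.sqrt n * ε := by
        exact mul_lt_mul_of_pos_right hlt hε
  · refine ⟨Metric.ball 0 1, Metric.ball_mem_nhds _ one_pos, fun lam hlam hmem => ?_⟩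
    set N : ℕ := ⌈(1 / (2 * lam)) ^ 2⌉₊ + 1 with hN
    apply summabilityIdeal_tail N
    refine summabilityIdeal_subset (fun n hn => ?_) hmem
    rw [Set.mem_setOf_eq] at hn ⊢
    have hn1 : 1 ≤ n := le_trans (Nat.le_add_left 1 _) hn
    have hnpos : (0 : ℝ) < n := by exact_mod_cast hn1
    have hspos : (0 : ℝ) < Real.sqrt n := Real.sqrt_pos.mpr hnpos
    intro hball
    rw [Metric.mem_ball, dist_zero_right] at hball
    have hx1 : (2 : ℝ) ≤ ‖(xSeq16 n).1‖ := by
      rw [xSeq16]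
      by_cases hsq : IsSquare n
      · rw [if_pos hsq]
        norm_num
      · rw [if_neg hsq]
        have : (0:ℝ) ≤ 1 / (n : ℝ) := by positivity
        rw [Real.norm_eq_abs, abs_of_pos (by linarith)]
        linarith
    have hxn : (2 : ℝ) ≤ ‖xSeq16 n‖ := le_trans hx1 (norm_fst_le _)
    have hsq : 1 / (2 * lam) ≤ Real.sqrt n := by
      rw [Real.le_sqrt (by positivity) hnpos.le]
      have h1 : ((1 / (2 * lam)) ^ 2 : ℝ) ≤ ⌈(1 / (2 * lam)) ^ 2⌉₊ := Nat.le_ceil _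
      have hNn : (N : ℝ) ≤ n := by exact_mod_cast hn
      rw [hN] at hNn
      push_cast at hNn
      linarith
    have hnormsmul : ‖(lam * Real.sqrt n) • xSeq16 n‖
        = (lam * Real.sqrt n) * ‖xSeq16 n‖ := by
      rw [norm_smul, Real.norm_eq_abs, abs_of_pos (by positivity)]
    rw [hnormsmul] at hball
    have h1 : (1 : ℝ) ≤ lam * Real.sqrt n * 2 := by
      have : 1 / (2 * lam) * (2 * lam) ≤ Real.sqrt n * (2 * lam) :=
        mul_le_mul_of_nonneg_right hsq (by positivity)
      rw [one_div_mul_cancel (by positivity)] at this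
      linarith
    have : lam * Real.sqrt n * 2 ≤ lam * Real.sqrt n * ‖xSeq16 n‖ :=
      mul_le_mul_of_nonneg_left hxn (by positivity)
    linarith
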